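/- Let u_k → u a.e. in ℝⁿ, with sup_k ‖u_k‖_{H^s} < ∞ and u_k → u in L^p(ℝⁿ) for all 2 < p < 2n/(n-2s). Then limsup_k ∫ u_k² log u_k² ≤ ∫ u² log u² (in ℝ ∪ {-∞}): splitting G(t) = t² log t² as G⁺ - G⁻ where G⁺(t) ≤ C|t|^q for a fixed q ∈ (2, 2n/(n-2s)), one has ∫ G⁺(u_k) → ∫ G⁺(u) by L^q-convergence and ∫ G⁻(u) ≤ liminf_k ∫ G⁻(u_k) by Fatou's lemma. -/

import Mathlib

open MeasureTheory
open scoped ENNReal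

/-- Gagliardo seminorm (squared) of a function on `ℝⁿ`. -/
noncomputable def gagliardo (n : ℕ) (s : ℝ) (u : (Fin n → ℝ) → ℝ) : ℝ≥0∞ :=
  ∫⁻ p : (Fin n → ℝ) × (Fin n → ℝ),
    ENNReal.ofReal ((u p.1 - u p.2) ^ 2 / ‖p.1 - p.2‖ ^ (n + 2 * s))

noncomputable def G (t : ℝ) : ℝ := if t = 0 then 0 else t ^ 2 * Real.log (t ^ 2)

/-- `∫ u² log u²` understood as `∫ G⁺(u) - ∫ G⁻(u) ∈ ℝ ∪ {-∞}`
(the positive part being assumed finite). -/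
noncomputable def logEnergy (n : ℕ) (u : (Fin n → ℝ) → ℝ) : EReal :=
  ((∫ x, max (G (u x)) 0 : ℝ) : EReal) -
    ((∫⁻ x, ENNReal.ofReal (max (-(G (u x))) 0) : ℝ≥0∞) : EReal)

lemma G_eq (t : ℝ) : G t = t ^ 2 * Real.log (t ^ 2) := by
  unfold G; split <;> simp [*]

lemma Gp_abs (t : ℝ) : max (G |t|) 0 = max (G t) 0 := by
  rw [G_eq, G_eq, sq_abs]

lemma Gp_mono : ∀ x y : ℝ, 0 ≤ x → x ≤ y → max (G x) 0 ≤ max (G y) 0 := by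
  intro x y hx hxy
  rcases le_or_gt x 1 with h1 | h1
  · have : G x ≤ 0 := by
      rw [G_eq]
      have hx2 : x ^ 2 ≤ 1 := by nlinarith
      have : Real.log (x ^ 2) ≤ 0 := Real.log_nonpos (by positivity) hx2
      nlinarith [sq_nonneg x]
    simp only [max_le_iff]
    exact ⟨this.trans (le_max_right _ _), le_max_right _ _⟩
  · have hy1 : 1 ≤ y := h1.le.trans hxy
    have : G x ≤ G y := by
      rw [G_eq, G_eq]
      have hlx : 0 ≤ Real.log (x ^ 2) := Real.log_nonneg (by nlinarith)
      have hll : Real.log (x ^ 2) ≤ Real.log (y ^ 2) :=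
        Real.log_le_log (by positivity) (by nlinarith)
      have hxy2 : x ^ 2 ≤ y ^ 2 := by nlinarith
      calc x ^ 2 * Real.log (x ^ 2) ≤ y ^ 2 * Real.log (x ^ 2) := by nlinarith
        _ ≤ y ^ 2 * Real.log (y ^ 2) := by nlinarith
    exact max_le_max this le_rfl

lemma G_hasDeriv {t : ℝ} (ht : t ≠ 0) :
    HasDerivAt (fun r : ℝ => r ^ 2 * Real.log (r ^ 2)) (2 * t * Real.log (t ^ 2) + 2 * t) t := by
  have h1 : HasDerivAt (fun r : ℝ => r ^ 2) (2 * t) t := by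
    simpa using (hasDerivAt_pow 2 t)
  have h2 : HasDerivAt (fun r : ℝ => Real.log (r ^ 2)) (2 * t / t ^ 2) t :=
    h1.log (pow_ne_zero 2 ht)
  have := h1.mul h2
  convert this using 1
  · rfl
  · rfl
  · rfl
  have ht2 : t ^ 2 ≠ 0 := pow_ne_zero 2 ht
  rw [mul_div_assoc', mul_comm (t ^ 2) (2 * t), mul_div_assoc, div_self ht2, mul_one]

lemma deriv_bound {q : ℝ} (hq : 2 < q) {t : ℝ} (ht : 1 ≤ t) :
    2 * t * Real.log (t ^ 2) + 2 * t ≤ (2 * (2 / (q - 2) + 1)) * t ^ (q - 1) := by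
  have ht0 : (0:ℝ) < t := lt_of_lt_of_le one_pos ht
  have hq2 : (0:ℝ) < q - 2 := by linarith
  have hlog : Real.log t ≤ t ^ (q - 2) / (q - 2) := Real.log_le_rpow_div ht0.le hq2
  have hlog2 : Real.log (t ^ 2) = 2 * Real.log t := by
    rw [Real.log_pow]; push_cast; ring
  have hone : (1:ℝ) ≤ t ^ (q - 2) := Real.one_le_rpow ht hq2.le
  have hts : t * t ^ (q - 2) = t ^ (q - 1) := by
    rw [show q - 1 = 1 + (q - 2) by ring, Real.rpow_add ht0, Real.rpow_one]
  have h1 : 2 * t * Real.log (t ^ 2) ≤ (4 / (q - 2)) * t ^ (q - 1) := by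
    rw [hlog2, ← hts]
    have hl : Real.log t * (q - 2) ≤ t ^ (q - 2) := (le_div_iff₀ hq2).mp hlog
    rw [div_mul_eq_mul_div, le_div_iff₀ hq2]
    nlinarith [mul_le_mul_of_nonneg_left hl (by positivity : (0:ℝ) ≤ 4 * t)]
  have h2 : 2 * t ≤ 2 * t ^ (q - 1) := by
    rw [← hts]; nlinarith
  have : (4 / (q - 2)) = 2 * (2 / (q-2)) := by ring
  nlinarith [Real.rpow_nonneg ht0.le (q-1)]

lemma Gp_eq_of_one_le {t : ℝ} (ht : 1 ≤ t) : max (G t) 0 = t ^ 2 * Real.log (t ^ 2) := by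
  rw [G_eq]
  exact max_eq_left (by nlinarith [Real.log_nonneg (show (1:ℝ) ≤ t ^ 2 by nlinarith)])

lemma Gp_eq_zero {t : ℝ} (ht0 : 0 ≤ t) (ht : t ≤ 1) : max (G t) 0 = 0 := by
  rw [G_eq]
  exact max_eq_right (by nlinarith [Real.log_nonpos (by positivity) (show t ^ 2 ≤ 1 by nlinarith)])

lemma Gp_sub_le {q : ℝ} (hq : 2 < q) {x y : ℝ} (hx : 1 ≤ x) (hxy : x ≤ y) :
    max (G y) 0 - max (G x) 0 ≤ (2 * (2 / (q - 2) + 1)) * y ^ (q - 1) * (y - x) := by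
  have hy : 1 ≤ y := hx.trans hxy
  rcases eq_or_lt_of_le hxy with rfl | hlt
  · simp
  have hcont : ContinuousOn (fun r : ℝ => r ^ 2 * Real.log (r ^ 2)) (Set.Icc x y) := by
    have : Continuous fun r : ℝ => r ^ 2 * Real.log (r ^ 2) :=
      Real.continuous_mul_log.comp (continuous_pow 2)
    exact this.continuousOn
  obtain ⟨c, hc, hceq⟩ := exists_hasDerivAt_eq_slope
    (fun r : ℝ => r ^ 2 * Real.log (r ^ 2)) (fun t => 2 * t * Real.log (t ^ 2) + 2 * t)
    hlt hcont (fun t ht => G_hasDeriv (by rcases ht with ⟨h1, h2⟩; intro h; rw [h] at h1; linarith))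
  have hC : (0:ℝ) < 2 * (2 / (q - 2) + 1) := by
    have : (0:ℝ) < q - 2 := by linarith
    positivity
  have h1c : (1:ℝ) ≤ c := le_of_lt (lt_of_le_of_lt hx hc.1)
  have hfd : y ^ 2 * Real.log (y ^ 2) - x ^ 2 * Real.log (x ^ 2)
      = (2 * c * Real.log (c ^ 2) + 2 * c) * (y - x) := by
    rw [hceq, div_mul_cancel₀ _ (by linarith : y - x ≠ 0)]
  have hb := deriv_bound hq h1c
  have hcy : c ^ (q - 1) ≤ y ^ (q - 1) :=
    Real.rpow_le_rpow (by linarith) (le_of_lt hc.2) (by linarith)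
  rw [Gp_eq_of_one_le hy, Gp_eq_of_one_le hx, hfd]
  have : 2 * c * Real.log (c ^ 2) + 2 * c ≤ (2 * (2 / (q - 2) + 1)) * y ^ (q - 1) :=
    hb.trans (mul_le_mul_of_nonneg_left hcy hC.le)
  nlinarith

lemma Gp_sub_le' {q : ℝ} (hq : 2 < q) {x y : ℝ} (hx : 0 ≤ x) (hxy : x ≤ y) :
    max (G y) 0 - max (G x) 0 ≤ (2 * (2 / (q - 2) + 1)) * y ^ (q - 1) * (y - x) := by
  have hC : (0:ℝ) < 2 * (2 / (q - 2) + 1) := by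
    have : (0:ℝ) < q - 2 := by linarith
    positivity
  rcases le_or_gt y 1 with hy1 | hy1
  · rw [Gp_eq_zero hx (hxy.trans hy1), Gp_eq_zero (hx.trans hxy) hy1]
    have : (0:ℝ) ≤ y ^ (q - 1) := Real.rpow_nonneg (hx.trans hxy) _
    nlinarith [mul_nonneg (mul_nonneg hC.le this) (sub_nonneg.mpr hxy)]
  rcases le_or_gt x 1 with hx1 | hx1
  · have h1 := Gp_sub_le hq le_rfl hy1.le
    rw [Gp_eq_zero hx hx1]
    rw [Gp_eq_zero zero_le_one le_rfl] at h1
    have hyq : (0:ℝ) ≤ y ^ (q - 1) := Real.rpow_nonneg (by linarith) _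
    nlinarith [mul_le_mul_of_nonneg_left (show y - 1 ≤ y - x by linarith)
      (mul_nonneg hC.le hyq)]
  · exact Gp_sub_le hq hx1.le hxy

lemma Gp_key {q : ℝ} (hq : 2 < q) (a b : ℝ) :
    |max (G a) 0 - max (G b) 0| ≤
      (2 * (2 / (q - 2) + 1)) * (|a| ^ (q - 1) + |b| ^ (q - 1)) * |a - b| := by
  have hC : (0:ℝ) < 2 * (2 / (q - 2) + 1) := by
    have : (0:ℝ) < q - 2 := by linarith
    positivity
  have main : ∀ a b : ℝ, |a| ≤ |b| →
      |max (G a) 0 - max (G b) 0| ≤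
        (2 * (2 / (q - 2) + 1)) * (|a| ^ (q - 1) + |b| ^ (q - 1)) * |a - b| := by
    intro a b hab
    rw [← Gp_abs a, ← Gp_abs b]
    have hmono := Gp_mono |a| |b| (abs_nonneg a) hab
    rw [abs_sub_comm, abs_of_nonneg (by linarith)]
    have h1 := Gp_sub_le' hq (abs_nonneg a) hab
    have h2 : |b| - |a| ≤ |a - b| := by
      rw [abs_sub_comm]; exact abs_sub_abs_le_abs_sub b a
    have h3 : |b| ^ (q - 1) ≤ |a| ^ (q - 1) + |b| ^ (q - 1) := by
      nlinarith [Real.rpow_nonneg (abs_nonneg a) (q - 1)]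
    calc max (G |b|) 0 - max (G |a|) 0
        ≤ (2 * (2 / (q - 2) + 1)) * |b| ^ (q - 1) * (|b| - |a|) := h1
      _ ≤ (2 * (2 / (q - 2) + 1)) * (|a| ^ (q - 1) + |b| ^ (q - 1)) * |a - b| := by
          apply mul_le_mul (mul_le_mul le_rfl h3 (Real.rpow_nonneg (abs_nonneg b) _) hC.le) h2
            (by linarith) (by positivity)
  rcases le_total |a| |b| with h | h
  · exact main a b h
  · have := main b a h
    rw [abs_sub_comm, abs_sub_comm b a] at this
    linarith [this]


lemma G_continuous : Continuous G := by
  have : G = fun t => t ^ 2 * Real.log (t ^ 2) := funext G_eq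
  rw [this]
  exact Real.continuous_mul_log.comp (continuous_pow 2)

variable {α : Type*} [MeasurableSpace α] {μ : Measure α}

lemma S_eq {q : ℝ} (hq : 2 < q) (w : α → ℝ) :
    eLpNorm w (ENNReal.ofReal q) μ = (∫⁻ x, (‖w x‖₊ : ℝ≥0∞) ^ q ∂μ) ^ (1 / q) := by
  simp_rw [← enorm_eq_nnnorm]
  rw [eLpNorm_eq_lintegral_rpow_enorm_toReal (by simp only [ne_eq, ENNReal.ofReal_eq_zero, not_le]; linarith)
    (by simp), ENNReal.toReal_ofReal (by linarith)]

lemma holder_piece {q : ℝ} (hq : 2 < q) {w z : α → ℝ} (hw : Measurable w) (hz : Measurable z) :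
    ∫⁻ x, ENNReal.ofReal (|w x| ^ (q - 1)) * ENNReal.ofReal |z x| ∂μ ≤
      (∫⁻ x, (‖w x‖₊ : ℝ≥0∞) ^ q ∂μ) ^ ((q - 1) / q) *
        (∫⁻ x, (‖z x‖₊ : ℝ≥0∞) ^ q ∂μ) ^ (1 / q) := by
  have h1q : 1 < q := by linarith
  have hq1 : (0:ℝ) < q - 1 := by linarith
  have hpq : (Real.conjExponent q).HolderConjugate q := (Real.HolderConjugate.conjExponent h1q).symm
  have hf : AEMeasurable (fun x => ENNReal.ofReal (|w x| ^ (q - 1))) μ :=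
    (ENNReal.measurable_ofReal.comp ((hw.abs.pow_const _))).aemeasurable
  have hg : AEMeasurable (fun x => ENNReal.ofReal |z x|) μ :=
    (ENNReal.measurable_ofReal.comp hz.abs).aemeasurable
  have H := ENNReal.lintegral_mul_le_Lp_mul_Lq μ hpq hf hg
  have hp_eq : Real.conjExponent q = q / (q - 1) := rfl
  have e1 : ∀ x : α, ENNReal.ofReal (|w x| ^ (q - 1)) ^ Real.conjExponent q
      = (‖w x‖₊ : ℝ≥0∞) ^ q := by
    intro x
    rw [ENNReal.ofReal_rpow_of_nonneg (by positivity) (by rw [hp_eq]; positivity),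
      ← Real.rpow_mul (abs_nonneg _), hp_eq,
      show (q - 1) * (q / (q - 1)) = q by field_simp,
      ← enorm_eq_nnnorm, Real.enorm_eq_ofReal_abs,
      ENNReal.ofReal_rpow_of_nonneg (abs_nonneg _) (by linarith)]
  have e2 : ∀ x : α, ENNReal.ofReal |z x| ^ q = (‖z x‖₊ : ℝ≥0∞) ^ q := by
    intro x; rw [← enorm_eq_nnnorm, Real.enorm_eq_ofReal_abs]
  have e3 : 1 / Real.conjExponent q = (q - 1) / q := by
    rw [hp_eq]; field_simp
  calc ∫⁻ x, ENNReal.ofReal (|w x| ^ (q - 1)) * ENNReal.ofReal |z x| ∂μ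
      ≤ (∫⁻ x, ENNReal.ofReal (|w x| ^ (q - 1)) ^ Real.conjExponent q ∂μ) ^ (1 / Real.conjExponent q)
        * (∫⁻ x, ENNReal.ofReal |z x| ^ q ∂μ) ^ (1 / q) := H
    _ = (∫⁻ x, (‖w x‖₊ : ℝ≥0∞) ^ q ∂μ) ^ ((q - 1) / q) *
        (∫⁻ x, (‖z x‖₊ : ℝ≥0∞) ^ q ∂μ) ^ (1 / q) := by
        rw [e3]
        congr 2
        · exact lintegral_congr fun x => e1 x
        · exact lintegral_congr fun x => e2 x

lemma Gp_le {q : ℝ} (hq : 2 < q) (a : ℝ) :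
    max (G a) 0 ≤ (2 * (2 / (q - 2) + 1)) * |a| ^ q := by
  have hC : (0:ℝ) < 2 * (2 / (q - 2) + 1) := by
    have : (0:ℝ) < q - 2 := by linarith
    positivity
  have h := Gp_key hq a 0
  have h0 : max (G 0) 0 = 0 := by rw [G_eq]; simp
  rw [h0, sub_zero, abs_of_nonneg (le_max_right _ _)] at h
  rcases eq_or_ne a 0 with rfl | ha
  · rw [h0]
    exact mul_nonneg hC.le (Real.rpow_nonneg (abs_nonneg _) _)
  · have hz : |(0:ℝ)| ^ (q - 1) = 0 := by rw [abs_zero, Real.zero_rpow (by linarith)]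
    rw [hz, add_zero, sub_zero] at h
    calc max (G a) 0 ≤ 2 * (2 / (q - 2) + 1) * |a| ^ (q - 1) * |a| := h
      _ = 2 * (2 / (q - 2) + 1) * |a| ^ q := by
          rw [mul_assoc, show q = (q - 1) + 1 by ring, Real.rpow_add (abs_pos.2 ha),
            Real.rpow_one]
          ring

lemma integrable_Gp {q : ℝ} (hq : 2 < q) {w : α → ℝ} (hw : Measurable w)
    (hmem : MemLp w (ENNReal.ofReal q) μ) :
    Integrable (fun x => max (G (w x)) 0) μ := by
  have hne0 : (ENNReal.ofReal q) ≠ 0 := by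
    simp only [ne_eq, ENNReal.ofReal_eq_zero, not_le]; linarith
  have hint := (hmem.integrable_norm_rpow hne0 (by simp)).const_mul (2 * (2 / (q - 2) + 1))
  refine hint.mono' ?_ ?_
  · exact ((G_continuous.max continuous_const).measurable.comp hw).aestronglyMeasurable
  · refine Filter.Eventually.of_forall fun x => ?_
    rw [Real.norm_eq_abs, abs_of_nonneg (le_max_right _ _)]
    simpa [Real.norm_eq_abs, ENNReal.toReal_ofReal (by linarith : (0:ℝ) ≤ q)]
      using Gp_le hq (w x)

lemma tendsto_int_Gp {q : ℝ} (hq : 2 < q) {u : ℕ → α → ℝ} {v : α → ℝ}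
    (humeas : ∀ k, Measurable (u k)) (hvmeas : Measurable v)
    (hmemv : MemLp v (ENNReal.ofReal q) μ) (hmemu : ∀ k, MemLp (u k) (ENNReal.ofReal q) μ)
    (hconv : Filter.Tendsto (fun k => eLpNorm (u k - v) (ENNReal.ofReal q) μ)
      Filter.atTop (nhds 0)) :
    Filter.Tendsto (fun k => ∫ x, max (G (u k x)) 0 ∂μ) Filter.atTop
      (nhds (∫ x, max (G (v x)) 0 ∂μ)) := by
  have hC : (0:ℝ) < 2 * (2 / (q - 2) + 1) := by
    have : (0:ℝ) < q - 2 := by linarith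
    positivity
  set C := 2 * (2 / (q - 2) + 1) with hCdef
  set S : (α → ℝ) → ℝ≥0∞ := fun w => ∫⁻ x, (‖w x‖₊ : ℝ≥0∞) ^ q ∂μ with hSdef
  have hSeq : ∀ w : α → ℝ, eLpNorm w (ENNReal.ofReal q) μ = (S w) ^ (1/q) :=
    fun w => S_eq hq w
  have hSfin : ∀ w : α → ℝ, MemLp w (ENNReal.ofReal q) μ → S w ≠ ⊤ := by
    intro w hw htop
    have h1 := hw.eLpNorm_lt_top
    rw [hSeq w, htop, ENNReal.top_rpow_of_pos (by positivity)] at h1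
    exact lt_irrefl _ h1
  set J : ℕ → ℝ≥0∞ :=
    fun k => ∫⁻ x, ENNReal.ofReal |max (G (u k x)) 0 - max (G (v x)) 0| ∂μ with hJdef
  have hmeasd : ∀ k, Measurable (fun x => u k x - v x) := fun k => (humeas k).sub hvmeas
  have hSd : ∀ k, S (u k - v) = ∫⁻ x, (‖u k x - v x‖₊ : ℝ≥0∞) ^ q ∂μ := by
    intro k; simp [hSdef, Pi.sub_apply]
  have hJle : ∀ k, J k ≤ ENNReal.ofReal C *
      ((S (u k)) ^ ((q-1)/q) + (S v) ^ ((q-1)/q)) * eLpNorm (u k - v) (ENNReal.ofReal q) μ := by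
    intro k
    have hpt : ∀ x, ENNReal.ofReal |max (G (u k x)) 0 - max (G (v x)) 0| ≤
        ENNReal.ofReal C * (ENNReal.ofReal (|u k x| ^ (q-1)) * ENNReal.ofReal (|u k x - v x|) +
          ENNReal.ofReal (|v x| ^ (q-1)) * ENNReal.ofReal (|u k x - v x|)) := by
      intro x
      calc ENNReal.ofReal |max (G (u k x)) 0 - max (G (v x)) 0|
          ≤ ENNReal.ofReal (C * (|u k x| ^ (q-1) * |u k x - v x| +
              |v x| ^ (q-1) * |u k x - v x|)) := by
            apply ENNReal.ofReal_le_ofReal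
            calc |max (G (u k x)) 0 - max (G (v x)) 0|
                ≤ C * (|u k x|^(q-1) + |v x|^(q-1)) * |u k x - v x| := Gp_key hq _ _
              _ = _ := by ring
        _ = _ := by
            rw [ENNReal.ofReal_mul hC.le,
              ENNReal.ofReal_add (by positivity) (by positivity),
              ENNReal.ofReal_mul (by positivity), ENNReal.ofReal_mul (by positivity),
              ENNReal.ofReal_mul (by positivity)]
    have hm1 : Measurable (fun x => ENNReal.ofReal (|u k x| ^ (q-1)) *
        ENNReal.ofReal (|u k x - v x|)) :=
      (ENNReal.measurable_ofReal.comp ((humeas k).abs.pow_const _)).mul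
        (ENNReal.measurable_ofReal.comp (hmeasd k).abs)
    calc J k ≤ ∫⁻ x, ENNReal.ofReal C *
          (ENNReal.ofReal (|u k x| ^ (q-1)) * ENNReal.ofReal (|u k x - v x|) +
            ENNReal.ofReal (|v x| ^ (q-1)) * ENNReal.ofReal (|u k x - v x|)) ∂μ :=
          lintegral_mono hpt
      _ = ENNReal.ofReal C *
          ((∫⁻ x, ENNReal.ofReal (|u k x| ^ (q-1)) * ENNReal.ofReal (|u k x - v x|) ∂μ) +
           (∫⁻ x, ENNReal.ofReal (|v x| ^ (q-1)) * ENNReal.ofReal (|u k x - v x|) ∂μ)) := by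
          rw [lintegral_const_mul _ (by fun_prop), lintegral_add_left hm1]
      _ ≤ ENNReal.ofReal C *
          ((S (u k)) ^ ((q-1)/q) * (S (u k - v)) ^ (1/q) +
           (S v) ^ ((q-1)/q) * (S (u k - v)) ^ (1/q)) := by
          gcongr
          · rw [hSd k]; exact holder_piece hq (humeas k) (hmeasd k)
          · rw [hSd k]; exact holder_piece hq hvmeas (hmeasd k)
      _ = ENNReal.ofReal C * ((S (u k)) ^ ((q-1)/q) + (S v) ^ ((q-1)/q)) *
            eLpNorm (u k - v) (ENNReal.ofReal q) μ := by
          rw [hSeq (u k - v)]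
          ring_nf
  -- uniform bound on (S (u k)) ^ ((q-1)/q)
  have hq1 : (1:ℝ≥0∞) ≤ ENNReal.ofReal q := by
    rw [show (1:ℝ≥0∞) = ENNReal.ofReal 1 by simp]
    exact ENNReal.ofReal_le_ofReal (by linarith)
  have hrw : ∀ w : α → ℝ, (S w) ^ ((q-1)/q) = (eLpNorm w (ENNReal.ofReal q) μ) ^ (q - 1) := by
    intro w
    rw [hSeq w, ← ENNReal.rpow_mul]
    congr 1
    field_simp
  have hub : ∀ᶠ k in Filter.atTop,
      (S (u k)) ^ ((q-1)/q) ≤ (1 + eLpNorm v (ENNReal.ofReal q) μ) ^ (q - 1) := by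
    filter_upwards [hconv.eventually_lt_const (show (0:ℝ≥0∞) < 1 by norm_num)] with k hk
    rw [hrw (u k)]
    apply ENNReal.rpow_le_rpow _ (by linarith)
    have htri : eLpNorm (u k) (ENNReal.ofReal q) μ ≤
        eLpNorm (u k - v) (ENNReal.ofReal q) μ + eLpNorm v (ENNReal.ofReal q) μ := by
      have h := eLpNorm_add_le (((humeas k).sub hvmeas).aestronglyMeasurable)
        hvmeas.aestronglyMeasurable hq1 (μ := μ)
      have h2 : (u k - v + v) = u k := by funext a; simp
      rw [h2] at h
      exact h
    exact htri.trans (add_le_add hk.le le_rfl)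
  set K := ENNReal.ofReal C *
    ((1 + eLpNorm v (ENNReal.ofReal q) μ) ^ (q - 1) + (S v) ^ ((q-1)/q)) with hKdef
  have hKtop : K ≠ ⊤ := by
    apply ENNReal.mul_ne_top ENNReal.ofReal_ne_top
    apply ENNReal.add_ne_top.mpr
    constructor
    · exact (ENNReal.rpow_lt_top_of_nonneg (by linarith)
        (ENNReal.add_ne_top.mpr ⟨by simp, hmemv.eLpNorm_ne_top⟩)).ne
    · exact (ENNReal.rpow_lt_top_of_nonneg
        (div_nonneg (by linarith) (by linarith)) (hSfin v hmemv)).ne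
  have hJev : ∀ᶠ k in Filter.atTop,
      J k ≤ K * eLpNorm (u k - v) (ENNReal.ofReal q) μ := by
    filter_upwards [hub] with k hk
    refine (hJle k).trans ?_
    rw [hKdef]
    gcongr
  have hJ0 : Filter.Tendsto J Filter.atTop (nhds 0) := by
    have h2 : Filter.Tendsto (fun k => K * eLpNorm (u k - v) (ENNReal.ofReal q) μ)
        Filter.atTop (nhds 0) := by
      simpa using ENNReal.Tendsto.const_mul hconv (Or.inr hKtop)
    exact tendsto_of_tendsto_of_tendsto_of_le_of_le' tendsto_const_nhds h2
      (Filter.Eventually.of_forall fun k => zero_le) hJev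
  -- pass to real integrals
  have hint_v : Integrable (fun x => max (G (v x)) 0) μ := integrable_Gp hq hvmeas hmemv
  have hint_u : ∀ k, Integrable (fun x => max (G (u k x)) 0) μ :=
    fun k => integrable_Gp hq (humeas k) (hmemu k)
  have hGpmeas : ∀ w : α → ℝ, Measurable w → Measurable (fun x => max (G (w x)) 0) :=
    fun w hw => (G_continuous.max continuous_const).measurable.comp hw
  have key : ∀ k, |(∫ x, max (G (u k x)) 0 ∂μ) - ∫ x, max (G (v x)) 0 ∂μ| ≤ (J k).toReal := by
    intro k
    rw [← integral_sub (hint_u k) hint_v]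
    have h1 : |∫ x, (max (G (u k x)) 0 - max (G (v x)) 0) ∂μ| ≤
        ∫ x, |max (G (u k x)) 0 - max (G (v x)) 0| ∂μ := by
      simpa [Real.norm_eq_abs] using
        norm_integral_le_integral_norm (μ := μ)
          (fun x => max (G (u k x)) 0 - max (G (v x)) 0)
    have h2 : ∫ x, |max (G (u k x)) 0 - max (G (v x)) 0| ∂μ = (J k).toReal := by
      rw [integral_eq_lintegral_of_nonneg_ae (f := fun x => |max (G (u k x)) 0 - max (G (v x)) 0|)
        (Filter.Eventually.of_forall fun x => abs_nonneg _)
        (((hGpmeas _ (humeas k)).sub (hGpmeas _ hvmeas)).abs.aestronglyMeasurable)]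
    linarith
  have htoReal : Filter.Tendsto (fun k => (J k).toReal) Filter.atTop (nhds 0) := by
    simpa [Function.comp_def] using (ENNReal.tendsto_toReal (by simp)).comp hJ0
  rw [← tendsto_sub_nhds_zero_iff]
  exact squeeze_zero_norm (fun k => by simpa [Real.norm_eq_abs] using key k) htoReal

lemma fatou_Gm {u : ℕ → α → ℝ} {v : α → ℝ}
    (humeas : ∀ k, Measurable (u k))
    (hae : ∀ᵐ x ∂μ, Filter.Tendsto (fun k => u k x) Filter.atTop (nhds (v x))) :
    ∫⁻ x, ENNReal.ofReal (max (-(G (v x))) 0) ∂μ ≤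
      Filter.liminf (fun k => ∫⁻ x, ENNReal.ofReal (max (-(G (u k x))) 0) ∂μ)
        Filter.atTop := by
  have hmeas : ∀ k, Measurable (fun x => ENNReal.ofReal (max (-(G (u k x))) 0)) :=
    fun k => ENNReal.measurable_ofReal.comp
      ((G_continuous.neg.max continuous_const).measurable.comp (humeas k))
  have hcong : ∫⁻ x, ENNReal.ofReal (max (-(G (v x))) 0) ∂μ =
      ∫⁻ x, Filter.liminf (fun k => ENNReal.ofReal (max (-(G (u k x))) 0)) Filter.atTop ∂μ := by
    apply lintegral_congr_ae
    filter_upwards [hae] with x hx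
    have ht : Filter.Tendsto (fun k => ENNReal.ofReal (max (-(G (u k x))) 0)) Filter.atTop
        (nhds (ENNReal.ofReal (max (-(G (v x))) 0))) :=
      (ENNReal.continuous_ofReal.tendsto _).comp
        (((G_continuous.neg.max continuous_const).tendsto _).comp hx)
    exact ht.liminf_eq.symm
  rw [hcong]
  exact lintegral_liminf_le hmeas


theorem stmt_19' (n : ℕ) (s : ℝ) (hs : 0 < s) (hs1 : s < 1) (hn : 2 * s < n)
    (u : ℕ → (Fin n → ℝ) → ℝ) (v : (Fin n → ℝ) → ℝ)
    (humeas : ∀ k, Measurable (u k)) (hvmeas : Measurable v)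
    (hae : ∀ᵐ x : Fin n → ℝ, Filter.Tendsto (fun k => u k x) Filter.atTop (nhds (v x)))
    (hmemp : ∀ p : ℝ, 2 < p → p < 2 * n / (n - 2 * s) →
      MemLp v (ENNReal.ofReal p) volume ∧ ∀ k, MemLp (u k) (ENNReal.ofReal p) volume)
    (hLp : ∀ p : ℝ, 2 < p → p < 2 * n / (n - 2 * s) →
      Filter.Tendsto (fun k => eLpNorm (u k - v) (ENNReal.ofReal p) volume)
        Filter.atTop (nhds 0)) :
    Filter.limsup (fun k => logEnergy n (u k)) Filter.atTop ≤ logEnergy n v := by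
  have hns : (0:ℝ) < (n:ℝ) - 2 * s := by linarith
  set Q : ℝ := 2 * n / (n - 2 * s) with hQdef
  have hQ2 : 2 < Q := by
    rw [hQdef, lt_div_iff₀ hns]; nlinarith
  set q : ℝ := (2 + Q) / 2 with hqdef
  have hq : 2 < q := by rw [hqdef]; linarith
  have hqQ : q < Q := by rw [hqdef]; linarith
  obtain ⟨hmv, hmu⟩ := hmemp q hq hqQ
  have hconv := hLp q hq hqQ
  have hA := tendsto_int_Gp hq humeas hvmeas hmv hmu hconv
  have hB := fatou_Gm (μ := volume) humeas hae
  set A : ℝ := ∫ x, max (G (v x)) 0 with hAdef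
  set Ak : ℕ → ℝ := fun k => ∫ x, max (G (u k x)) 0 with hAkdef
  set B : ℝ≥0∞ := ∫⁻ x, ENNReal.ofReal (max (-(G (v x))) 0) with hBdef
  set Bk : ℕ → ℝ≥0∞ := fun k => ∫⁻ x, ENNReal.ofReal (max (-(G (u k x))) 0) with hBkdef
  have hrepr : (fun k => logEnergy n (u k)) =
      (fun k => ((Ak k : ℝ) : EReal)) + (fun k => -((Bk k : ℝ≥0∞) : EReal)) := by
    funext k
    simp only [Pi.add_apply, logEnergy, sub_eq_add_neg]
    rfl
  rw [hrepr]
  have hlimA : Filter.limsup (fun k => ((Ak k : ℝ) : EReal)) Filter.atTop = ((A : ℝ) : EReal) :=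
    ((continuous_coe_real_ereal.tendsto _).comp hA).limsup_eq
  have hlimB : ((B : ℝ≥0∞) : EReal) ≤
      Filter.liminf (fun k => ((Bk k : ℝ≥0∞) : EReal)) Filter.atTop := by
    have hmono : Monotone (fun x : ℝ≥0∞ => (x : EReal)) :=
      fun x y h => EReal.coe_ennreal_le_coe_ennreal_iff.2 h
    have hmap := hmono.map_liminf_of_continuousAt (F := Filter.atTop) Bk
      (continuous_coe_ennreal_ereal.continuousAt)
    rw [show (fun k => ((Bk k : ℝ≥0∞) : EReal)) = (fun x : ℝ≥0∞ => (x : EReal)) ∘ Bk from rfl,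
      ← hmap]
    exact EReal.coe_ennreal_le_coe_ennreal_iff.2 hB
  calc Filter.limsup ((fun k => ((Ak k : ℝ) : EReal)) + fun k => -((Bk k : ℝ≥0∞) : EReal))
        Filter.atTop
      ≤ Filter.limsup (fun k => ((Ak k : ℝ) : EReal)) Filter.atTop +
        Filter.limsup (fun k => -((Bk k : ℝ≥0∞) : EReal)) Filter.atTop :=
        EReal.limsup_add_le (Or.inl (by rw [hlimA]; exact EReal.coe_ne_bot _))
          (Or.inl (by rw [hlimA]; exact EReal.coe_ne_top _))
    _ = ((A : ℝ) : EReal) +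
        -(Filter.liminf (fun k => ((Bk k : ℝ≥0∞) : EReal)) Filter.atTop) := by
        rw [hlimA, show (fun k => -((Bk k : ℝ≥0∞) : EReal)) =
          -(fun k => ((Bk k : ℝ≥0∞) : EReal)) from rfl, EReal.limsup_neg]
    _ ≤ ((A : ℝ) : EReal) + -((B : ℝ≥0∞) : EReal) := by
        exact add_le_add_right (EReal.neg_le_neg_iff.2 hlimB) _
    _ = logEnergy n v := by rw [logEnergy, sub_eq_add_neg]

theorem stmt_19 (n : ℕ) (s : ℝ) (hs : 0 < s) (hs1 : s < 1) (hn : 2 * s < n)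
    (u : ℕ → (Fin n → ℝ) → ℝ) (v : (Fin n → ℝ) → ℝ)
    (humeas : ∀ k, Measurable (u k)) (hvmeas : Measurable v)
    (hae : ∀ᵐ x : Fin n → ℝ, Filter.Tendsto (fun k => u k x) Filter.atTop (nhds (v x)))
    (M : ℝ≥0∞) (hM : M ≠ ⊤)
    (hbound : ∀ k, eLpNorm (u k) 2 volume ≤ M ∧ gagliardo n s (u k) ≤ M)
    (hmemp : ∀ p : ℝ, 2 < p → p < 2 * n / (n - 2 * s) →
      MemLp v (ENNReal.ofReal p) volume ∧ ∀ k, MemLp (u k) (ENNReal.ofReal p) volume)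
    (hLp : ∀ p : ℝ, 2 < p → p < 2 * n / (n - 2 * s) →
      Filter.Tendsto (fun k => eLpNorm (u k - v) (ENNReal.ofReal p) volume)
        Filter.atTop (nhds 0)) :
    Filter.limsup (fun k => logEnergy n (u k)) Filter.atTop ≤ logEnergy n v := by
  exact stmt_19' n s hs hs1 hn u v humeas hvmeas hae hmemp hLp
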